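/- Global a priori error bound for WST-LSPG (Corollary 4.6): retaining the indexed window-residual setup with trial subspaces and the WST-LSPG optimality property, for every window index k, ‖ũ k - u k‖ ≤ ∑_{i = 0}^{k} [ (∏_{j ∈ Finset.range (k - i)} 2 * c₂ (k - j)) / (∏_{j ∈ Finset.range (k - i + 1)} c₁ (k - j)) ] * ‖R i (û i) (û₀ i)‖; that is, the space–time error over window k is bounded, a priori, by a weighted sum of the residual norms of the projected full-order-model solutions over windows 0 through k. -/

import Mathlib

/-- Global a priori error bound for WST-LSPG (Corollary 4.6). -/
theorem global_a_priori_error_bound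
    (N : ℕ) (M : ℕ → ℕ)
    (A B : ∀ k : ℕ, EuclideanSpace ℝ (Fin (M k)) →L[ℝ] EuclideanSpace ℝ (Fin (M k)))
    (Aic Bic : ∀ k : ℕ, EuclideanSpace ℝ (Fin N) →L[ℝ] EuclideanSpace ℝ (Fin (M k)))
    (Δt : ℝ) (hΔt : 0 < Δt)
    (F : ∀ k : ℕ, EuclideanSpace ℝ (Fin (M k)) → EuclideanSpace ℝ (Fin (M k)))
    (f₀ : ℕ → EuclideanSpace ℝ (Fin N) → EuclideanSpace ℝ (Fin N))
    (κ : ℝ) (hκ : 0 ≤ κ)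
    (hF : ∀ k x y, ‖F k x - F k y‖ ≤ κ * ‖x - y‖)
    (hf₀ : ∀ k x y, ‖f₀ k x - f₀ k y‖ ≤ κ * ‖x - y‖)
    (σA σB σAic σBic : ℕ → ℝ)
    (hσA : ∀ k, 0 < σA k) (hA : ∀ k x, σA k * ‖x‖ ≤ ‖A k x‖)
    (hσB : ∀ k, 0 ≤ σB k) (hB : ∀ k x, ‖B k x‖ ≤ σB k * ‖x‖)
    (hσAic : ∀ k, 0 ≤ σAic k) (hAic : ∀ k x, ‖Aic k x‖ ≤ σAic k * ‖x‖)
    (hσBic : ∀ k, 0 ≤ σBic k) (hBic : ∀ k x, ‖Bic k x‖ ≤ σBic k * ‖x‖)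
    (R : ∀ k : ℕ, EuclideanSpace ℝ (Fin (M k)) → EuclideanSpace ℝ (Fin N) →
      EuclideanSpace ℝ (Fin (M k)))
    (hR : ∀ k w w₀, R k w w₀ =
      A k w - Δt • B k (F k w) + Aic k w₀ - Δt • Bic k (f₀ k w₀))
    (c₁ c₂ : ℕ → ℝ)
    (hc₁ : ∀ k, c₁ k = σA k - σB k * Δt * κ)
    (hc₂ : ∀ k, c₂ k = σAic k + Δt * κ * σBic k)
    (hc₁pos : ∀ k, 0 < c₁ k)
    (u : ∀ k : ℕ, EuclideanSpace ℝ (Fin (M k))) (u₀ : ℕ → EuclideanSpace ℝ (Fin N))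
    (hFOM : ∀ k, R k (u k) (u₀ k) = 0)
    (uR : ∀ k : ℕ, EuclideanSpace ℝ (Fin (M k))) (uR₀ : ℕ → EuclideanSpace ℝ (Fin N))
    (hIC0 : uR₀ 0 = u₀ 0)
    (hIC : ∀ k, 1 ≤ k → ‖uR₀ k - u₀ k‖ ≤ ‖uR (k - 1) - u (k - 1)‖)
    (S : ∀ k : ℕ, Set (EuclideanSpace ℝ (Fin (M k))))
    (W : ℕ → Submodule ℝ (EuclideanSpace ℝ (Fin N)))
    (huR₀W : ∀ k, uR₀ k ∈ W k)
    (uP : ∀ k : ℕ, EuclideanSpace ℝ (Fin (M k)))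
    (huPS : ∀ k, uP k ∈ S k)
    (huPclosest : ∀ k, ∀ w ∈ S k, ‖u k - uP k‖ ≤ ‖u k - w‖)
    (uP₀ : ℕ → EuclideanSpace ℝ (Fin N))
    (huP₀ : ∀ k, uP₀ k = (Submodule.orthogonalProjectionOnto (W k) (u₀ k) : EuclideanSpace ℝ (Fin N)))
    (hopt : ∀ k, ∀ w ∈ S k, ‖R k (uR k) (uR₀ k)‖ ≤ ‖R k w (uR₀ k)‖)
    (k : ℕ) :
    ‖uR k - u k‖ ≤ ∑ i ∈ Finset.range (k + 1),
      ((∏ j ∈ Finset.range (k - i), 2 * c₂ (k - j)) /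
        (∏ j ∈ Finset.range (k - i + 1), c₁ (k - j))) * ‖R i (uP i) (uP₀ i)‖ := by
  -- c₂ is nonnegative
  have hc₂nn : ∀ k, 0 ≤ c₂ k := fun k => by
    rw [hc₂]
    have := mul_nonneg (mul_nonneg hΔt.le hκ) (hσBic k)
    linarith [hσAic k]
  -- residual difference identity
  have hRdiff : ∀ k w w₀, R k w w₀ =
      A k (w - u k) - Δt • B k (F k w - F k (u k)) + Aic k (w₀ - u₀ k)
        - Δt • Bic k (f₀ k w₀ - f₀ k (u₀ k)) := by
    intro k w w₀
    have h0 : R k w w₀ = R k w w₀ - R k (u k) (u₀ k) := by rw [hFOM k, sub_zero]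
    rw [h0, hR, hR]
    simp only [map_sub, smul_sub]
    abel
  -- lower bound on residual
  have hlower : ∀ k w w₀, c₁ k * ‖w - u k‖ ≤ ‖R k w w₀‖ + c₂ k * ‖w₀ - u₀ k‖ := by
    intro k w w₀
    have heq : A k (w - u k) = R k w w₀ + Δt • B k (F k w - F k (u k))
        - Aic k (w₀ - u₀ k) + Δt • Bic k (f₀ k w₀ - f₀ k (u₀ k)) := by
      rw [hRdiff k w w₀]; abel
    have s1 : ‖Δt • B k (F k w - F k (u k))‖ = Δt * ‖B k (F k w - F k (u k))‖ := by
      rw [norm_smul, Real.norm_of_nonneg hΔt.le]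
    have s2 : ‖Δt • Bic k (f₀ k w₀ - f₀ k (u₀ k))‖
        = Δt * ‖Bic k (f₀ k w₀ - f₀ k (u₀ k))‖ := by
      rw [norm_smul, Real.norm_of_nonneg hΔt.le]
    have t1 := norm_add_le (R k w w₀ + Δt • B k (F k w - F k (u k)) - Aic k (w₀ - u₀ k))
      (Δt • Bic k (f₀ k w₀ - f₀ k (u₀ k)))
    have t2 := norm_sub_le (R k w w₀ + Δt • B k (F k w - F k (u k))) (Aic k (w₀ - u₀ k))
    have t3 := norm_add_le (R k w w₀) (Δt • B k (F k w - F k (u k)))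
    have hA2 : σA k * ‖w - u k‖ ≤ ‖A k (w - u k)‖ := hA k _
    rw [heq] at hA2
    have hB2 : ‖B k (F k w - F k (u k))‖ ≤ σB k * (κ * ‖w - u k‖) :=
      (hB k _).trans (mul_le_mul_of_nonneg_left (hF k w (u k)) (hσB k))
    have hAic2 : ‖Aic k (w₀ - u₀ k)‖ ≤ σAic k * ‖w₀ - u₀ k‖ := hAic k _
    have hBic2 : ‖Bic k (f₀ k w₀ - f₀ k (u₀ k))‖ ≤ σBic k * (κ * ‖w₀ - u₀ k‖) :=
      (hBic k _).trans (mul_le_mul_of_nonneg_left (hf₀ k w₀ (u₀ k)) (hσBic k))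
    have hB3 : Δt * ‖B k (F k w - F k (u k))‖ ≤ Δt * (σB k * (κ * ‖w - u k‖)) :=
      mul_le_mul_of_nonneg_left hB2 hΔt.le
    have hBic3 : Δt * ‖Bic k (f₀ k w₀ - f₀ k (u₀ k))‖
        ≤ Δt * (σBic k * (κ * ‖w₀ - u₀ k‖)) := mul_le_mul_of_nonneg_left hBic2 hΔt.le
    rw [hc₁, hc₂]
    nlinarith [hA2, t1, t2, t3, s1, s2]
  -- shifting the initial condition changes the residual by at most c₂ * distance
  have hshift : ∀ k w a b, ‖R k w a - R k w b‖ ≤ c₂ k * ‖a - b‖ := by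
    intro k w a b
    have heq : R k w a - R k w b = Aic k (a - b) - Δt • Bic k (f₀ k a - f₀ k b) := by
      rw [hR, hR]
      simp only [map_sub, smul_sub]
      abel
    rw [heq]
    have t1 := norm_sub_le (Aic k (a - b)) (Δt • Bic k (f₀ k a - f₀ k b))
    have s2 : ‖Δt • Bic k (f₀ k a - f₀ k b)‖ = Δt * ‖Bic k (f₀ k a - f₀ k b)‖ := by
      rw [norm_smul, Real.norm_of_nonneg hΔt.le]
    have hAic2 : ‖Aic k (a - b)‖ ≤ σAic k * ‖a - b‖ := hAic k _
    have hBic2 : ‖Bic k (f₀ k a - f₀ k b)‖ ≤ σBic k * (κ * ‖a - b‖) :=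
      (hBic k _).trans (mul_le_mul_of_nonneg_left (hf₀ k a b) (hσBic k))
    have hBic3 : Δt * ‖Bic k (f₀ k a - f₀ k b)‖ ≤ Δt * (σBic k * (κ * ‖a - b‖)) :=
      mul_le_mul_of_nonneg_left hBic2 hΔt.le
    rw [hc₂]
    nlinarith [t1, s2]
  -- the projection of the window IC is within the IC error
  have hproj : ∀ k, ‖uR₀ k - uP₀ k‖ ≤ ‖uR₀ k - u₀ k‖ := by
    intro k
    have h1 : (Submodule.orthogonalProjectionOnto (W k) (uR₀ k) : EuclideanSpace ℝ (Fin N)) = uR₀ k :=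
      Submodule.starProjection_eq_self_iff.mpr (huR₀W k)
    have h2 : ‖(Submodule.orthogonalProjectionOnto (W k) (uR₀ k - u₀ k) : EuclideanSpace ℝ (Fin N))‖
        ≤ ‖uR₀ k - u₀ k‖ := by
      have := (Submodule.orthogonalProjectionOnto (W k)).le_opNorm (uR₀ k - u₀ k)
      have hn := Submodule.orthogonalProjectionOnto_norm_le (W k)
      calc ‖(Submodule.orthogonalProjectionOnto (W k) (uR₀ k - u₀ k) : EuclideanSpace ℝ (Fin N))‖
          = ‖Submodule.orthogonalProjectionOnto (W k) (uR₀ k - u₀ k)‖ := rfl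
        _ ≤ ‖Submodule.orthogonalProjectionOnto (W k)‖ * ‖uR₀ k - u₀ k‖ := this
        _ ≤ 1 * ‖uR₀ k - u₀ k‖ := by
            exact mul_le_mul_of_nonneg_right hn (norm_nonneg _)
        _ = ‖uR₀ k - u₀ k‖ := one_mul _
    have h3 : (Submodule.orthogonalProjectionOnto (W k) (uR₀ k - u₀ k) : EuclideanSpace ℝ (Fin N))
        = uR₀ k - uP₀ k := by
      rw [map_sub, huP₀ k]
      push_cast
      rw [h1]
    rw [← h3]
    exact h2
  -- key per-window bound
  have key : ∀ k, c₁ k * ‖uR k - u k‖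
      ≤ ‖R k (uP k) (uP₀ k)‖ + 2 * c₂ k * ‖uR₀ k - u₀ k‖ := by
    intro k
    have h1 := hlower k (uR k) (uR₀ k)
    have h2 := hopt k (uP k) (huPS k)
    have h3 : ‖R k (uP k) (uR₀ k)‖ ≤ ‖R k (uP k) (uP₀ k)‖ + c₂ k * ‖uR₀ k - uP₀ k‖ := by
      have t := hshift k (uP k) (uR₀ k) (uP₀ k)
      have t2 := norm_sub_norm_le (R k (uP k) (uR₀ k)) (R k (uP k) (uP₀ k))
      linarith
    have h4 : c₂ k * ‖uR₀ k - uP₀ k‖ ≤ c₂ k * ‖uR₀ k - u₀ k‖ :=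
      mul_le_mul_of_nonneg_left (hproj k) (hc₂nn k)
    linarith
  -- main induction
  induction k with
  | zero =>
    have h := key 0
    rw [hIC0, sub_self, norm_zero, mul_zero, add_zero] at h
    rw [Finset.sum_range_one]
    simp only [Nat.zero_sub, Nat.sub_self, Finset.prod_range_zero, zero_add,
      Finset.prod_range_one, Nat.sub_zero]
    rw [div_mul_eq_mul_div, one_mul, le_div_iff₀ (hc₁pos 0)]
    linarith
  | succ k ih =>
    have h := key (k + 1)
    have hic : ‖uR₀ (k + 1) - u₀ (k + 1)‖ ≤ ‖uR k - u k‖ := by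
      simpa using hIC (k + 1) (by omega)
    have hmono : 2 * c₂ (k + 1) * ‖uR₀ (k + 1) - u₀ (k + 1)‖
        ≤ 2 * c₂ (k + 1) * (∑ i ∈ Finset.range (k + 1),
          ((∏ j ∈ Finset.range (k - i), 2 * c₂ (k - j)) /
            (∏ j ∈ Finset.range (k - i + 1), c₁ (k - j))) * ‖R i (uP i) (uP₀ i)‖) := by
      have h2c : (0 : ℝ) ≤ 2 * c₂ (k + 1) := by linarith [hc₂nn (k + 1)]
      exact mul_le_mul_of_nonneg_left (hic.trans ih) h2c
    have hterm : ∀ i ∈ Finset.range (k + 1),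
        ((∏ j ∈ Finset.range (k + 1 - i), 2 * c₂ (k + 1 - j)) /
          (∏ j ∈ Finset.range (k + 1 - i + 1), c₁ (k + 1 - j))) * ‖R i (uP i) (uP₀ i)‖
        = (2 * c₂ (k + 1) / c₁ (k + 1)) *
          (((∏ j ∈ Finset.range (k - i), 2 * c₂ (k - j)) /
            (∏ j ∈ Finset.range (k - i + 1), c₁ (k - j))) * ‖R i (uP i) (uP₀ i)‖) := by
      intro i hi
      have hik : i ≤ k := Nat.lt_succ_iff.mp (Finset.mem_range.mp hi)
      have e1 : k + 1 - i = (k - i) + 1 := by omega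
      rw [e1]
      rw [Finset.prod_range_succ' (fun j => 2 * c₂ (k + 1 - j)) (k - i)]
      rw [Finset.prod_range_succ' (fun j => c₁ (k + 1 - j)) (k - i + 1)]
      simp only [Nat.succ_sub_succ_eq_sub, Nat.sub_zero]
      ring
    have hsum : ∑ i ∈ Finset.range (k + 1 + 1),
        ((∏ j ∈ Finset.range (k + 1 - i), 2 * c₂ (k + 1 - j)) /
          (∏ j ∈ Finset.range (k + 1 - i + 1), c₁ (k + 1 - j))) * ‖R i (uP i) (uP₀ i)‖
        = ‖R (k + 1) (uP (k + 1)) (uP₀ (k + 1))‖ / c₁ (k + 1)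
          + (2 * c₂ (k + 1) / c₁ (k + 1)) * (∑ i ∈ Finset.range (k + 1),
            ((∏ j ∈ Finset.range (k - i), 2 * c₂ (k - j)) /
              (∏ j ∈ Finset.range (k - i + 1), c₁ (k - j))) * ‖R i (uP i) (uP₀ i)‖) := by
      rw [Finset.sum_range_succ, Finset.sum_congr rfl hterm, Finset.mul_sum]
      simp only [Nat.sub_self, Finset.prod_range_zero, zero_add, Finset.prod_range_one,
        Nat.sub_zero]
      ring
    rw [hsum]
    have hc := hc₁pos (k + 1)
    rw [← sub_nonneg]
    have expand : ‖R (k + 1) (uP (k + 1)) (uP₀ (k + 1))‖ / c₁ (k + 1)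
        + (2 * c₂ (k + 1) / c₁ (k + 1)) * (∑ i ∈ Finset.range (k + 1),
            ((∏ j ∈ Finset.range (k - i), 2 * c₂ (k - j)) /
              (∏ j ∈ Finset.range (k - i + 1), c₁ (k - j))) * ‖R i (uP i) (uP₀ i)‖)
        - ‖uR (k + 1) - u (k + 1)‖
        = (‖R (k + 1) (uP (k + 1)) (uP₀ (k + 1))‖
            + 2 * c₂ (k + 1) * (∑ i ∈ Finset.range (k + 1),
              ((∏ j ∈ Finset.range (k - i), 2 * c₂ (k - j)) /
                (∏ j ∈ Finset.range (k - i + 1), c₁ (k - j))) * ‖R i (uP i) (uP₀ i)‖)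
            - c₁ (k + 1) * ‖uR (k + 1) - u (k + 1)‖) / c₁ (k + 1) := by
      field_simp
    rw [expand]
    apply div_nonneg _ hc.le
    linarith
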